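/- Define 𝕏₃ := {α ∈ 2^ω : ∀n ∃p ≥ n such that α|p is placed}, where u ∈ 2^{<ω} is placed if u ≠ ∅ and there exists t ∈ ω^{<ω} with N_u ∩ K_t ≠ ∅, (|u|−1)₀ = Σ^t_{|t|}, and u(|u|−1) = 1 whenever (|u|−1)₁ > 0. Then 𝕏₃ is a dense G_δ subset of 2^ω. -/
import Mathlib


/-- Triangular numbers. -/
def tri (m : ℕ) : ℕ := m * (m + 1) / 2

/-- The pairing `⟨n,p⟩ := (Σ_{k ≤ n+p} k) + p`. -/
def pairN (n p : ℕ) : ℕ := tri (n + p) + p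

/-- `Σ^t_k := Σ_{j<k} (t(j) + 2)`. -/
def sigT (t : List ℕ) (k : ℕ) : ℕ := ((t.take k).map (· + 2)).sum

/-- The set `K_t ⊆ 2^ω`: for each `k < |t|`, the vertical slices numbered
`Σ^t_k, …, Σ^t_k + t(k) + 1` are prescribed: the `i`-th of them is
`(w_{t(k)})_i · 0^∞`, except that the `0`-th one additionally carries a `1`
at position `t(k) + 1` (i.e. equals `(w_{t(k)})₀·0^{t(k)+1-|(w_{t(k)})₀|}·1·0^∞`). -/
def Kt (w : ℕ → List Bool) (t : List ℕ) : Set (ℕ → Bool) :=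
  {α | ∀ k < t.length, ∀ i < t.getD k 0 + 2, ∀ p,
    α (pairN (sigT t k + i) p) =
      if i = 0 ∧ p = t.getD k 0 + 1 then true
      else (w (t.getD k 0)).getD (pairN i p) false}

/-- The clopen piece `K^ε_t := {α ∈ K_t : α(⟨Σ^t_{|t|}, 0⟩) = ε}`. -/
def Keps (w : ℕ → List Bool) (t : List ℕ) (ε : Bool) : Set (ℕ → Bool) :=
  {α | α ∈ Kt w t ∧ α (pairN (sigT t t.length) 0) = ε}

/-- `M(q) := max {m : Σ_{k≤m} k ≤ q}`. -/
def Mq (q : ℕ) : ℕ := Nat.findGreatest (fun m => tri m ≤ q) q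

/-- The second inverse-pairing coordinate: `(q)₁ := q − Σ_{k≤M(q)} k`. -/
def unpair1 (q : ℕ) : ℕ := q - tri (Mq q)

/-- The first inverse-pairing coordinate: `(q)₀ := M(q) − (q)₁`. -/
def unpair0 (q : ℕ) : ℕ := Mq q - unpair1 q

/-- The basic clopen set `N_u := {α : u ⊆ α}`. -/
def Nu (u : List Bool) : Set (ℕ → Bool) := {α | ∀ k < u.length, α k = u.getD k false}

/-- `u` is placed with witness `t`: `N_u ∩ K_t ≠ ∅`, `(|u|−1)₀ = Σ^t_{|t|}`, and
`u(|u|−1) = 1` whenever `(|u|−1)₁ > 0`. -/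
def PlacedWit (w : ℕ → List Bool) (u : List Bool) (t : List ℕ) : Prop :=
  (Nu u ∩ Kt w t).Nonempty ∧ unpair0 (u.length - 1) = sigT t t.length ∧
  (0 < unpair1 (u.length - 1) → u.getD (u.length - 1) false = true)

/-- `u` is placed: `u ≠ ∅` and it has some witness. -/
def Placed (w : ℕ → List Bool) (u : List Bool) : Prop :=
  u ≠ [] ∧ ∃ t : List ℕ, PlacedWit w u t

/-- The initial segment `α|p` as a finite sequence. -/
def restr (α : ℕ → Bool) (p : ℕ) : List Bool := List.ofFn fun i : Fin p => α i

/-- `𝕏₃ := {α ∈ 2^ω : ∀n ∃p ≥ n, α|p is placed}`. -/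
def X3 (w : ℕ → List Bool) : Set (ℕ → Bool) := {α | ∀ n, ∃ p ≥ n, Placed w (restr α p)}

/-! ### Auxiliary lemmas -/

lemma tri_two (m : ℕ) : 2 * tri m = m * (m + 1) :=
  Nat.mul_div_cancel' (even_iff_two_dvd.mp (Nat.even_mul_succ_self m))

lemma tri_succ (m : ℕ) : tri (m + 1) = tri m + (m + 1) := by
  have h1 := tri_two m
  have h2 := tri_two (m + 1)
  have h3 : (m + 1) * (m + 1 + 1) = m * (m + 1) + 2 * (m + 1) := by ring
  omega

lemma tri_mono : Monotone tri := fun a b h =>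
  Nat.div_le_div_right (Nat.mul_le_mul h (by omega))

lemma le_tri (m : ℕ) : m ≤ tri m := by
  induction m with
  | zero => simp [tri]
  | succ k ih => rw [tri_succ]; omega

lemma Mq_diag (m : ℕ) : Mq (tri m + m) = m := by
  unfold Mq
  rw [Nat.findGreatest_eq_iff]
  refine ⟨by omega, fun _ => by omega, fun k hk hk' htk => ?_⟩
  have : tri (m + 1) ≤ tri k := tri_mono hk
  rw [tri_succ] at this
  omega

lemma unpair1_diag (m : ℕ) : unpair1 (tri m + m) = m := by
  unfold unpair1
  rw [Mq_diag]; omega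

lemma unpair0_diag (m : ℕ) : unpair0 (tri m + m) = 0 := by
  unfold unpair0
  rw [Mq_diag, unpair1_diag]; omega

lemma restr_length (α : ℕ → Bool) (p : ℕ) : (restr α p).length = p := by
  simp [restr]

lemma restr_getD (α : ℕ → Bool) (p k : ℕ) (hk : k < p) :
    (restr α p).getD k false = α k := by
  rw [List.getD_eq_getElem _ _ (by simpa [restr] using hk)]
  simp [restr]

lemma mem_Kt_nil (w : ℕ → List Bool) (α : ℕ → Bool) : α ∈ Kt w [] := by
  intro k hk; simp at hk

lemma mem_Nu_restr (α : ℕ → Bool) (p : ℕ) : α ∈ Nu (restr α p) := by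
  intro k hk
  rw [restr_length] at hk
  rw [restr_getD _ _ _ hk]

/-- The key density point: any `α` eventually constantly `true` is in `X3 w`. -/
lemma mem_X3_of_eventually_true (w : ℕ → List Bool) (α : ℕ → Bool) (N : ℕ)
    (hα : ∀ i, N ≤ i → α i = true) : α ∈ X3 w := by
  intro n
  set m := max n N + 1 with hm
  refine ⟨tri (m + 1), ?_, ?_, [], ?_, ?_, ?_⟩
  · have := le_tri (m + 1); omega
  · have h := restr_length α (tri (m + 1))
    have := le_tri (m + 1)
    intro hnil
    rw [hnil] at h
    simp at h
    omega
  · exact ⟨α, mem_Nu_restr α _, mem_Kt_nil w α⟩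
  · rw [restr_length]
    have h1 : tri (m + 1) - 1 = tri m + m := by rw [tri_succ]; omega
    rw [h1, unpair0_diag]
    simp [sigT]
  · intro _
    rw [restr_length]
    have h1 : tri (m + 1) - 1 = tri m + m := by rw [tri_succ]; omega
    have h2 : tri (m + 1) - 1 < tri (m + 1) := by
      have := le_tri (m + 1); omega
    rw [restr_getD _ _ _ h2, h1]
    exact hα _ (by have := le_tri m; omega)

lemma isOpen_placed_restr (w : ℕ → List Bool) (p : ℕ) :
    IsOpen {α : ℕ → Bool | Placed w (restr α p)} := by
  rw [isOpen_iff_mem_nhds]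
  intro α hα
  have hC : IsOpen {β : ℕ → Bool | ∀ i : Fin p, β i = α i} := by
    have heq : {β : ℕ → Bool | ∀ i : Fin p, β i = α i}
        = ⋂ i : Fin p, (fun β : ℕ → Bool => β i) ⁻¹' {α i} := by
      ext β; simp [Set.mem_iInter]
    rw [heq]
    exact isOpen_iInter_of_finite fun i =>
      (continuous_apply (i : ℕ)).isOpen_preimage _ (isOpen_discrete _)
  refine mem_nhds_iff.mpr ⟨_, ?_, hC, fun i => rfl⟩
  intro β hβ
  have : restr β p = restr α p := by
    unfold restr
    exact congrArg List.ofFn (funext fun i => hβ i)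
  simpa [Set.mem_setOf_eq, this] using hα

/-- `𝕏₃` is a dense `G_δ` subset of `2^ω`. -/
theorem stmt15 (w : ℕ → List Bool) (hw : ∀ n, (w n).length = n + 1)
    (hdense : ∀ s : List Bool, ∃ n, s <+: w n) :
    Dense (X3 w) ∧ IsGδ (X3 w) := by
  constructor
  · -- Density
    intro α
    set f : ℕ → (ℕ → Bool) := fun N i => if i < N then α i else true with hf
    have hmem : ∀ N, f N ∈ X3 w := fun N =>
      mem_X3_of_eventually_true w (f N) N (fun i hi => by simp [hf, Nat.not_lt.mpr hi])
    have htend : Filter.Tendsto f Filter.atTop (nhds α) := by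
      rw [tendsto_pi_nhds]
      intro i
      apply Filter.Tendsto.congr' _ (tendsto_const_nhds : Filter.Tendsto (fun _ : ℕ => α i) Filter.atTop (nhds (α i)))
      filter_upwards [Filter.eventually_ge_atTop (i + 1)] with N hN
      simp [hf, Nat.lt_of_lt_of_le (Nat.lt_succ_self i) hN]
    exact mem_closure_of_tendsto htend (Filter.Eventually.of_forall hmem)
  · -- Gδ
    have hX : X3 w = ⋂ n, ⋃ p, ⋃ (_ : n ≤ p), {α : ℕ → Bool | Placed w (restr α p)} := by
      ext α
      simp [X3, Set.mem_iInter, Set.mem_iUnion]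
    rw [hX]
    exact IsGδ.iInter_of_isOpen fun n =>
      isOpen_iUnion fun p => isOpen_iUnion fun _ => isOpen_placed_restr w p
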